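/- Let η₋<η₊, Σ>0 and M∈ℝ with 2M≠Σ². Set β=2M/Σ²−1, define g(η)=β·e^{βη}/(e^{βη₊}−e^{βη₋}) for η∈[η₋,η₊], and define f'(η)=−(η₊−η)/(η₊−η₋). Then (M−Σ²/2)·∫_{η₋}^{η₊} f'(u)g(u)du + Σ²/(2(η₊−η₋)) = (Σ²/2)·β/(e^{(η₊−η₋)β}−1). -/

import Mathlib

/-- The ergodic-theorem computation of the long-run growth rate of the lower local
time of a reflected Brownian motion with drift `M - Σ²/2` and volatility `Σ` on
`[η₋, η₊]`, with stationary density `g` and test-function derivative `f'`. -/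
theorem stmt3
    (ηminus ηplus Sig M : ℝ) (h : ηminus < ηplus) (hS : 0 < Sig)
    (hM : 2 * M ≠ Sig ^ 2)
    (β : ℝ) (hβ : β = 2 * M / Sig ^ 2 - 1)
    (g f' : ℝ → ℝ)
    (hg : ∀ η, g η = β * Real.exp (β * η) /
      (Real.exp (β * ηplus) - Real.exp (β * ηminus)))
    (hf' : ∀ η, f' η = -(ηplus - η) / (ηplus - ηminus)) :
    (M - Sig ^ 2 / 2) * (∫ u in ηminus..ηplus, f' u * g u) +
        Sig ^ 2 / (2 * (ηplus - ηminus))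
      = Sig ^ 2 / 2 * β / (Real.exp ((ηplus - ηminus) * β) - 1) := by
  have hD : ηplus - ηminus ≠ 0 := sub_ne_zero.mpr h.ne'
  have hS2 : Sig ^ 2 ≠ 0 := pow_ne_zero 2 hS.ne'
  have hβ0 : β ≠ 0 := by
    rw [hβ]
    intro hc
    apply hM
    have : 2 * M / Sig ^ 2 = 1 := by linarith
    field_simp at this
    linarith
  have hE : Real.exp (β * ηplus) - Real.exp (β * ηminus) ≠ 0 := by
    refine sub_ne_zero.mpr fun hc => ?_
    have := Real.exp_injective hc
    exact hD (by have := mul_left_cancel₀ hβ0 this; linarith)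
  have hX : Real.exp ((ηplus - ηminus) * β) - 1 ≠ 0 := by
    refine sub_ne_zero.mpr fun hc => ?_
    rcases (show ηplus - ηminus = 0 ∨ β = 0 by simpa using hc) with h' | h'
    · exact hD h'
    · exact hβ0 h'
  set c : ℝ := -(1 / ((ηplus - ηminus) * (Real.exp (β * ηplus) - Real.exp (β * ηminus)))) with hc
  set G : ℝ → ℝ := fun u =>
    c * ((ηplus - u) * Real.exp (β * u) + Real.exp (β * u) * (1 / β)) with hG
  have hderiv : ∀ u ∈ Set.uIcc ηminus ηplus, HasDerivAt G (f' u * g u) u := by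
    intro u _
    have hb : HasDerivAt (fun u => Real.exp (β * u)) (Real.exp (β * u) * β) u := by
      simpa using (((hasDerivAt_id u).const_mul β).exp)
    have ha : HasDerivAt (fun u : ℝ => ηplus - u) (-1) u := by
      simpa using ((hasDerivAt_id u).const_sub ηplus)
    have h1 : HasDerivAt (fun u => (ηplus - u) * Real.exp (β * u))
        ((-1) * Real.exp (β * u) + (ηplus - u) * (Real.exp (β * u) * β)) u :=
      ha.mul hb
    have h2 : HasDerivAt (fun u => Real.exp (β * u) * (1 / β))
        ((Real.exp (β * u) * β) * (1 / β)) u :=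
      hb.mul_const (1 / β)
    have h3 := ((h1.add h2).const_mul c)
    refine h3.congr_deriv (Eq.symm ?_)
    rw [hf', hg, hc]
    field_simp
    ring
  have hcont : IntervalIntegrable (fun u => f' u * g u) MeasureTheory.volume ηminus ηplus := by
    have : (fun u => f' u * g u) = fun u =>
        (-(ηplus - u) / (ηplus - ηminus)) *
          (β * Real.exp (β * u) / (Real.exp (β * ηplus) - Real.exp (β * ηminus))) := by
      funext u; rw [hf' u, hg u]
    rw [this]
    apply Continuous.intervalIntegrable
    fun_prop
  have hint : (∫ u in ηminus..ηplus, f' u * g u) = G ηplus - G ηminus :=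
    intervalIntegral.integral_eq_sub_of_hasDerivAt hderiv hcont
  rw [hint]
  have hM2 : M - Sig ^ 2 / 2 = Sig ^ 2 * β / 2 := by
    rw [hβ]; field_simp
  have hXY : Real.exp (β * ηplus) =
      Real.exp ((ηplus - ηminus) * β) * Real.exp (β * ηminus) := by
    rw [← Real.exp_add]; ring_nf
  have hY : Real.exp (β * ηminus) ≠ 0 := (Real.exp_pos _).ne'
  rw [hM2]
  simp only [hG, hc]
  rw [hXY] at hE ⊢
  set Y := Real.exp (β * ηminus) with hYdef
  set X := Real.exp ((ηplus - ηminus) * β) with hXdef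
  field_simp
  ring
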